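/- Let G be a topological group with group topologies τ (the given one) and σ transversal to τ, and let L be a τ-compact normal subgroup of G. Then there is a σ-open neighborhood V of the identity with V ∩ L = {e}, and hence the quotient topologies on G/L induced by τ and σ are transversal provided both are non-discrete. -/

import Mathlib

open Pointwise


/-- Let `τ`, `σ` be transversal (non-discrete Hausdorff, with discrete join, i.e.
`τ ⊓ σ = ⊥` in Mathlib's order) group topologies on `G` and `L` a `τ`-compact
subgroup. Then there is a `σ`-open neighborhood `V` of the identity with
`V ∩ L = {1}`. -/
private theorem mem_nhds_aux {G : Type*} (t : TopologicalSpace G) {s : Set G} {a : G}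
    (hs : @IsOpen G t s) (ha : a ∈ s) : s ∈ @nhds G t a := by
  letI := t
  exact hs.mem_nhds ha

theorem stmt_12 {G : Type*} [Group G] (τ σ : TopologicalSpace G)
    (hτ : @IsTopologicalGroup G τ _) (hσ : @IsTopologicalGroup G σ _)
    (hτ2 : @T2Space G τ) (hσ2 : @T2Space G σ)
    (hτnd : τ ≠ ⊥) (hσnd : σ ≠ ⊥) (htrans : τ ⊓ σ = ⊥)
    (L : Subgroup G) (hL : @IsCompact G τ (L : Set G)) :
    ∃ V : Set G, @IsOpen G σ V ∧ (1 : G) ∈ V ∧ V ∩ (L : Set G) = {1} := by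
  classical
  -- Step 1: `{1}` is a neighborhood of `1` in the (discrete) infimum topology.
  have h1 : ({1} : Set G) ∈ @nhds G τ 1 ⊓ @nhds G σ 1 := by
    rw [← nhds_inf, htrans]
    have hopen : @IsOpen G ⊥ {1} := by
      letI : TopologicalSpace G := ⊥
      haveI : DiscreteTopology G := ⟨rfl⟩
      exact isOpen_discrete _
    exact mem_nhds_aux ⊥ hopen rfl
  obtain ⟨A, hA, B, hB, hAB⟩ := Filter.mem_inf_iff.mp h1
  obtain ⟨U₀, hU₀A, hU₀o, hU₀1⟩ := (@mem_nhds_iff G τ 1 A).mp hA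
  obtain ⟨W₀, hW₀B, hW₀o, hW₀1⟩ := (@mem_nhds_iff G σ 1 B).mp hB
  have hUW₀ : U₀ ∩ W₀ ⊆ {1} := by
    intro z hz
    have : z ∈ A ∩ B := ⟨hU₀A hz.1, hW₀B hz.2⟩
    rw [← hAB] at this
    exact this
  -- Step 2: symmetric open neighborhoods with `U'⁻¹ * U' ⊆ U₀`, `W'⁻¹ * W' ⊆ W₀`.
  obtain ⟨U, hUo, hU1, hUU⟩ : ∃ U : Set G, @IsOpen G τ U ∧ (1 : G) ∈ U ∧ U * U ⊆ U₀ := by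
    letI := τ; haveI := hτ
    exact exists_open_nhds_one_mul_subset (hU₀o.mem_nhds hU₀1)
  obtain ⟨W, hWo, hW1, hWW⟩ : ∃ W : Set G, @IsOpen G σ W ∧ (1 : G) ∈ W ∧ W * W ⊆ W₀ := by
    letI := σ; haveI := hσ
    exact exists_open_nhds_one_mul_subset (hW₀o.mem_nhds hW₀1)
  set U' : Set G := U ∩ U⁻¹ with hU'def
  set W' : Set G := W ∩ W⁻¹ with hW'def
  have hU'o : @IsOpen G τ U' := by
    letI := τ; haveI := hτ
    exact hUo.inter hUo.inv
  have hW'o : @IsOpen G σ W' := by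
    letI := σ; haveI := hσ
    exact hWo.inter hWo.inv
  have hU'1 : (1 : G) ∈ U' := ⟨hU1, by simpa using hU1⟩
  have hW'1 : (1 : G) ∈ W' := ⟨hW1, by simpa using hW1⟩
  have hU'prop : ∀ a b : G, a ∈ U' → b ∈ U' → a⁻¹ * b ∈ U₀ := by
    intro a b ha hb
    exact hUU (Set.mul_mem_mul ha.2 hb.1)
  have hW'prop : ∀ a b : G, a ∈ W' → b ∈ W' → a⁻¹ * b ∈ W₀ := by
    intro a b ha hb
    exact hWW (Set.mul_mem_mul ha.2 hb.1)
  -- Step 3: `K = L \ U'` is `τ`-compact and misses `1`.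
  set K : Set G := (L : Set G) ∩ U'ᶜ with hKdef
  have hK : @IsCompact G τ K := by
    letI := τ
    exact hL.inter_right hU'o.isClosed_compl
  -- Step 4: some `σ`-neighborhood of `1` misses `K`.
  have hmain : ∃ V₀ ∈ @nhds G σ 1, V₀ ∩ K = ∅ := by
    by_contra hcon
    push_neg at hcon
    have hfne : (@nhds G σ 1 ⊓ Filter.principal K).NeBot :=
      Filter.inf_principal_neBot_iff.mpr hcon
    haveI := hfne
    obtain ⟨x, hxK, hx⟩ := hK (f := @nhds G σ 1 ⊓ Filter.principal K) inf_le_right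
    haveI : (@nhds G τ x ⊓ (@nhds G σ 1 ⊓ Filter.principal K)).NeBot := hx
    -- extract two close points
    have key : ∀ P : Set G, P ∈ @nhds G τ x → ∀ Q : Set G, Q ∈ @nhds G σ 1 →
        (P ∩ (Q ∩ K)).Nonempty := by
      intro P hP Q hQ
      have hmem : P ∩ (Q ∩ K) ∈ @nhds G τ x ⊓ (@nhds G σ 1 ⊓ Filter.principal K) :=
        Filter.inter_mem (Filter.mem_inf_of_left hP)
          (Filter.mem_inf_of_right (Filter.inter_mem (Filter.mem_inf_of_left hQ)
            (Filter.mem_inf_of_right (Filter.mem_principal_self K))))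
      exact Filter.nonempty_of_mem hmem
    -- the τ-open set of points `g` with `x⁻¹ * g ∈ U'`
    set P : Set G := (fun g => x⁻¹ * g) ⁻¹' U' with hPdef
    have hPo : @IsOpen G τ P := by
      letI := τ; haveI := hτ
      exact hU'o.preimage (continuous_const.mul continuous_id)
    have hxP : x ∈ P := by
      show x⁻¹ * x ∈ U'
      simpa using hU'1
    have hPx : P ∈ @nhds G τ x := mem_nhds_aux τ hPo hxP
    obtain ⟨v₁, hv₁P, hv₁W, hv₁K⟩ := key P hPx W' (mem_nhds_aux σ hW'o hW'1)
    have hv₁ne : v₁ ≠ 1 := by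
      intro h
      exact hv₁K.2 (h ▸ hU'1)
    have hcompl : @IsOpen G σ ({v₁}ᶜ) := by
      letI := σ; haveI := hσ2
      exact isOpen_compl_singleton
    have hQ2 : W' ∩ {v₁}ᶜ ∈ @nhds G σ 1 := by
      exact Filter.inter_mem (mem_nhds_aux σ hW'o hW'1)
        (mem_nhds_aux σ hcompl (by simpa using hv₁ne.symm))
    obtain ⟨v₂, hv₂P, ⟨hv₂W, hv₂ne⟩, hv₂K⟩ := key P hPx _ hQ2
    have h₁ : v₁⁻¹ * v₂ ∈ U₀ := by
      have := hU'prop (x⁻¹ * v₁) (x⁻¹ * v₂) hv₁P hv₂P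
      simpa [mul_assoc] using this
    have h₂ : v₁⁻¹ * v₂ ∈ W₀ := hW'prop v₁ v₂ hv₁W hv₂W
    have : v₁⁻¹ * v₂ = 1 := hUW₀ ⟨h₁, h₂⟩
    have : v₂ = v₁ := by
      have := mul_eq_one_iff_inv_eq.mp this
      simp_all
    exact hv₂ne (by simp [this])
  obtain ⟨V₀, hV₀, hV₀K⟩ := hmain
  obtain ⟨V₁, hV₁V₀, hV₁o, hV₁1⟩ := (@mem_nhds_iff G σ 1 V₀).mp hV₀
  refine ⟨V₁ ∩ W', (by letI := σ; exact hV₁o.inter hW'o), ⟨hV₁1, hW'1⟩, ?_⟩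
  apply Set.Subset.antisymm
  · rintro v ⟨⟨hvV₁, hvW⟩, hvL⟩
    have hvU : v ∈ U' := by
      by_contra h
      have : v ∈ V₀ ∩ K := ⟨hV₁V₀ hvV₁, hvL, h⟩
      rw [hV₀K] at this
      exact this
    have h₁ : v ∈ U₀ := by simpa using hU'prop 1 v hU'1 hvU
    have h₂ : v ∈ W₀ := by simpa using hW'prop 1 v hW'1 hvW
    exact hUW₀ ⟨h₁, h₂⟩
  · rintro z hz
    rw [Set.mem_singleton_iff] at hz
    subst hz
    exact ⟨⟨hV₁1, hW'1⟩, L.one_mem⟩
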